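/- Let X₁, …, Xₙ be i.i.d. copies of a centered (E[X] = 0) random vector X in ℝ^d with E‖X‖² < ∞ and covariance Σ, and let ω₁, …, ωₙ be i.i.d. MCAR masks with probability vector p ∈ (0,1]^d, independent of (X₁, …, Xₙ). Set Z_i := X_i ⊙ ω_i and S := n⁻¹ Σ_{i=1}^n Z_i Z_iᵀ. Then the debiased covariance estimator Σ̂ := P⁻¹(I_d − P⁻¹) diag(S) + P⁻¹ S P⁻¹ is unbiased: E[Σ̂] = Σ. -/

import Mathlib

open MeasureTheory ProbabilityTheory Matrix

/-- The empirical second-moment matrix `n⁻¹ ∑ᵢ Zᵢ Zᵢᵀ` of sample vectors `Z₁, …, Zₙ`. -/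
noncomputable def empSecondMoment {n d : ℕ} (Z : Fin n → Fin d → ℝ) :
    Matrix (Fin d) (Fin d) ℝ :=
  Matrix.of fun k l => (n : ℝ)⁻¹ * ∑ i, Z i k * Z i l

/-- The debiased covariance estimator
`P⁻¹(I - P⁻¹) diag(S) + P⁻¹ S P⁻¹` built from a matrix `S` and probabilities `p`. -/
noncomputable def debiasedCov {d : ℕ} (p : Fin d → ℝ) (S : Matrix (Fin d) (Fin d) ℝ) :
    Matrix (Fin d) (Fin d) ℝ :=
  Matrix.diagonal (fun i => (p i)⁻¹) * (1 - Matrix.diagonal (fun i => (p i)⁻¹))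
      * Matrix.diagonal (fun i => S i i)
    + Matrix.diagonal (fun i => (p i)⁻¹) * S * Matrix.diagonal (fun i => (p i)⁻¹)

/-- Entrywise formula for `debiasedCov`. -/
lemma debiasedCov_apply {d : ℕ} (p : Fin d → ℝ) (S : Matrix (Fin d) (Fin d) ℝ)
    (k l : Fin d) :
    debiasedCov p S k l
      = (if k = l then (p k)⁻¹ * (1 - (p k)⁻¹) * S k k else 0)
        + (p k)⁻¹ * S k l * (p l)⁻¹ := by
  have h0 : (1 : Matrix (Fin d) (Fin d) ℝ) - Matrix.diagonal (fun i => (p i)⁻¹)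
      = Matrix.diagonal (fun i => 1 - (p i)⁻¹) := by
    rw [← Matrix.diagonal_one, Matrix.diagonal_sub]
  rw [debiasedCov, Matrix.add_apply, h0, Matrix.diagonal_mul_diagonal,
    Matrix.diagonal_mul_diagonal, Matrix.mul_diagonal, Matrix.diagonal_mul,
    Matrix.diagonal_apply]

/-- **Unbiasedness of the debiased covariance estimator under MCAR zero imputation.**
Let `X₁, …, Xₙ` be i.i.d. copies of a centered random vector with `E‖X‖² < ∞` and covariance
`Σ`, and `W₁, …, Wₙ` i.i.d. MCAR masks with probability vector `p ∈ (0,1]^d`, independent of the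
`Xᵢ`. With `Zᵢ := Xᵢ ⊙ Wᵢ` and `S := n⁻¹ ∑ᵢ Zᵢ Zᵢᵀ`, the estimator
`Σ̂ := P⁻¹(I - P⁻¹) diag(S) + P⁻¹ S P⁻¹` is unbiased: `E[Σ̂] = Σ`. -/
theorem debiasedCov_unbiased
    {Ω : Type*} [MeasurableSpace Ω] (μ : Measure Ω) [IsProbabilityMeasure μ]
    {d n : ℕ} (hn : 0 < n) (Xs Ws : Fin n → Ω → Fin d → ℝ)
    (p : Fin d → ℝ) (Sig : Matrix (Fin d) (Fin d) ℝ)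
    (hp : ∀ i, p i ∈ Set.Ioc (0 : ℝ) 1)
    (hXmeas : ∀ i, Measurable (Xs i)) (hWmeas : ∀ i, Measurable (Ws i))
    (hX2 : ∀ i, Integrable (fun a => ∑ k, (Xs i a k) ^ 2) μ)
    -- the `Xᵢ` are identically distributed …
    (hXid : ∀ i j, Measure.map (Xs i) μ = Measure.map (Xs j) μ)
    -- … mutually independent …
    (hXindep : iIndepFun Xs μ)
    -- … centered, with covariance `Σ`
    (hXcentered : ∀ i k, ∫ a, Xs i a k ∂μ = 0)
    (hXcov : ∀ i k l, ∫ a, Xs i a k * Xs i a l ∂μ = Sig k l)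
    -- the masks take values in `{0,1}` with `P(Wᵢₖ = 1) = pₖ`
    (hW01 : ∀ i, ∀ᵐ a ∂μ, ∀ k, Ws i a k = 0 ∨ Ws i a k = 1)
    (hWber : ∀ i k, μ {a | Ws i a k = 1} = ENNReal.ofReal (p k))
    -- all mask coordinates, across all samples, are mutually independent
    (hWiIndep : iIndepFun
      (fun ik : Fin n × Fin d => fun a => Ws ik.1 a ik.2) μ)
    -- the family of masks is independent of the family of samples
    (hWX : IndepFun (fun a i => Ws i a) (fun a i => Xs i a) μ) :
    Matrix.of (fun k l =>
        ∫ a, debiasedCov p (empSecondMoment (fun i k => Xs i a k * Ws i a k)) k l ∂μ)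
      = Sig := by
  have hXk : ∀ i k, Measurable (fun a => Xs i a k) :=
    fun i k => (measurable_pi_apply k).comp (hXmeas i)
  have hWk : ∀ i k, Measurable (fun a => Ws i a k) :=
    fun i k => (measurable_pi_apply k).comp (hWmeas i)
  -- integral of one mask coordinate
  have hWint : ∀ i k, ∫ a, Ws i a k ∂μ = p k := by
    intro i k
    have hs : MeasurableSet {a | Ws i a k = 1} := (hWk i k) (measurableSet_singleton 1)
    have hae : (fun a => Ws i a k)
        =ᵐ[μ] Set.indicator {a | Ws i a k = 1} (fun _ => (1 : ℝ)) := by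
      filter_upwards [hW01 i] with a ha
      rcases ha k with h | h <;> simp [Set.indicator, h]
    rw [integral_congr_ae hae, integral_indicator_const _ hs, measureReal_def, hWber i k, smul_eq_mul,
      mul_one, ENNReal.toReal_ofReal (hp k).1.le]
  -- integral of a product of two mask coordinates
  have hWW : ∀ i k l, ∫ a, Ws i a k * Ws i a l ∂μ = if k = l then p k else p k * p l := by
    intro i k l
    rcases eq_or_ne k l with rfl | hkl
    · have hae : (fun a => Ws i a k * Ws i a k) =ᵐ[μ] fun a => Ws i a k := by
        filter_upwards [hW01 i] with a ha
        rcases ha k with h | h <;> simp [h]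
      rw [integral_congr_ae hae, hWint i k, if_pos rfl]
    · have hind : IndepFun (fun a => Ws i a k) (fun a => Ws i a l) μ :=
        hWiIndep.indepFun (show ((i, k) : Fin n × Fin d) ≠ (i, l) by
          simp [Prod.ext_iff, hkl])
      rw [if_neg hkl]
      calc ∫ a, Ws i a k * Ws i a l ∂μ
          = (∫ a, Ws i a k ∂μ) * ∫ a, Ws i a l ∂μ :=
            hind.integral_fun_mul_eq_mul_integral (hWk i k).aestronglyMeasurable (hWk i l).aestronglyMeasurable
        _ = p k * p l := by rw [hWint, hWint]
  -- integrability of products of sample coordinates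
  have hXXint : ∀ i k l, Integrable (fun a => Xs i a k * Xs i a l) μ := by
    intro i k l
    refine (hX2 i).mono' ((hXk i k).mul (hXk i l)).aestronglyMeasurable ?_
    filter_upwards with a
    have h2 : (Xs i a k) ^ 2 ≤ ∑ m, (Xs i a m) ^ 2 :=
      Finset.single_le_sum (f := fun m => (Xs i a m) ^ 2) (fun m _ => sq_nonneg _)
        (Finset.mem_univ k)
    have h3 : (Xs i a l) ^ 2 ≤ ∑ m, (Xs i a m) ^ 2 :=
      Finset.single_le_sum (f := fun m => (Xs i a m) ^ 2) (fun m _ => sq_nonneg _)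
        (Finset.mem_univ l)
    have h4 : |Xs i a k * Xs i a l| ≤ ((Xs i a k) ^ 2 + (Xs i a l) ^ 2) / 2 := by
      rw [abs_mul]
      nlinarith [sq_abs (Xs i a k), sq_abs (Xs i a l),
        sq_nonneg (|Xs i a k| - |Xs i a l|), abs_nonneg (Xs i a k), abs_nonneg (Xs i a l)]
    simp only [Real.norm_eq_abs]
    linarith
  -- integrability of products of observed coordinates
  have hZint : ∀ i k l,
      Integrable (fun a => Xs i a k * Ws i a k * (Xs i a l * Ws i a l)) μ := by
    intro i k l
    refine (hXXint i k l).abs.mono'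
      (((hXk i k).mul (hWk i k)).mul ((hXk i l).mul (hWk i l))).aestronglyMeasurable ?_
    filter_upwards [hW01 i] with a ha
    rcases ha k with h1 | h1 <;> rcases ha l with h2 | h2 <;>
      simp [h1, h2, Real.norm_eq_abs, abs_nonneg, abs_mul] <;> positivity
  -- expectation of one product of observed coordinates
  have hZval : ∀ i k l, ∫ a, Xs i a k * Ws i a k * (Xs i a l * Ws i a l) ∂μ
      = (if k = l then p k else p k * p l) * Sig k l := by
    intro i k l
    have heq : (fun a => Xs i a k * Ws i a k * (Xs i a l * Ws i a l))
        = fun a => (Ws i a k * Ws i a l) * (Xs i a k * Xs i a l) := by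
      funext a; ring
    have mφ : Measurable (fun w : Fin n → Fin d → ℝ => w i k * w i l) := by
      fun_prop
    have hindWX : IndepFun (fun a => Ws i a k * Ws i a l)
        (fun a => Xs i a k * Xs i a l) μ := hWX.comp mφ mφ
    rw [heq]
    calc ∫ a, (Ws i a k * Ws i a l) * (Xs i a k * Xs i a l) ∂μ
        = (∫ a, Ws i a k * Ws i a l ∂μ) * ∫ a, Xs i a k * Xs i a l ∂μ :=
          hindWX.integral_fun_mul_eq_mul_integral ((hWk i k).mul (hWk i l)).aestronglyMeasurable
            ((hXk i k).mul (hXk i l)).aestronglyMeasurable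
      _ = _ := by rw [hWW, hXcov]
  -- integrability and expectation of the empirical second moments
  have hSint : ∀ k l,
      Integrable (fun a => empSecondMoment (fun i m => Xs i a m * Ws i a m) k l) μ := by
    intro k l
    simp only [empSecondMoment, Matrix.of_apply]
    exact (integrable_finset_sum _ (fun i _ => hZint i k l)).const_mul _
  have hSval : ∀ k l, ∫ a, empSecondMoment (fun i m => Xs i a m * Ws i a m) k l ∂μ
      = (if k = l then p k else p k * p l) * Sig k l := by
    intro k l
    simp only [empSecondMoment, Matrix.of_apply]
    rw [integral_const_mul, integral_finset_sum _ (fun i _ => hZint i k l)]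
    simp_rw [hZval]
    rw [Finset.sum_const, Finset.card_univ, Fintype.card_fin, nsmul_eq_mul, ← mul_assoc,
      inv_mul_cancel₀ (Nat.cast_ne_zero.mpr hn.ne'), one_mul]
  -- conclude entrywise
  have hpk0 : ∀ k, p k ≠ 0 := fun k => (hp k).1.ne'
  ext k l
  simp only [Matrix.of_apply]
  rcases eq_or_ne k l with rfl | hkl
  · simp only [debiasedCov_apply, eq_self_iff_true, if_true]
    rw [integral_add ((hSint k k).const_mul _) (((hSint k k).const_mul _).mul_const _),
      integral_const_mul]
    simp_rw [mul_comm ((p k)⁻¹ * empSecondMoment _ k k) ((p k)⁻¹)]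
    rw [integral_const_mul, integral_const_mul, hSval k k, if_pos rfl]
    linear_combination (Sig k k) * inv_mul_cancel₀ (hpk0 k)
  · simp only [debiasedCov_apply, if_neg hkl, zero_add]
    simp_rw [mul_comm ((p k)⁻¹ * empSecondMoment _ k l) ((p l)⁻¹)]
    rw [integral_const_mul, integral_const_mul, hSval k l, if_neg hkl]
    linear_combination ((p l)⁻¹ * p l * Sig k l) * inv_mul_cancel₀ (hpk0 k)
      + Sig k l * inv_mul_cancel₀ (hpk0 l)
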